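/- Let t ≥ 2 be an integer and, for each i ∈ {1,…,t}, let G_i be a finite simple graph that is a minimal (1,k_i)-polar obstruction and is (1,k_i+1)-polar. Then, setting k = t − 1 + (k_1 + ⋯ + k_t), the disjoint union G = G_1 + ⋯ + G_t is a minimal (1,k)-polar obstruction that is (1,k+1)-polar. -/

import Mathlib

open SimpleGraph

universe u v

/-! ### Basic predicates -/

/-- `B` induces a disjoint union of complete graphs in `G` (i.e. `G[B]` is a cluster). -/
def IsClusterSet {V : Type*} (G : SimpleGraph V) (B : Set V) : Prop :=
  ∀ ⦃u w x : V⦄, u ∈ B → w ∈ B → x ∈ B → G.Adj u w → G.Adj w x → u ≠ x → G.Adj u x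

/-- `A` induces a complete multipartite graph in `G`
(the complement of `G[A]` is a disjoint union of cliques). -/
def IsCompleteMultipartiteSet {V : Type*} (G : SimpleGraph V) (A : Set V) : Prop :=
  ∀ ⦃u w x : V⦄, u ∈ A → w ∈ A → x ∈ A → u ≠ w → w ≠ x → u ≠ x →
    ¬ G.Adj u w → ¬ G.Adj w x → ¬ G.Adj u x

/-- `A` is an independent set of `G`. -/
def IsIndepSet {V : Type*} (G : SimpleGraph V) (A : Set V) : Prop :=
  ∀ ⦃u w : V⦄, u ∈ A → w ∈ A → ¬ G.Adj u w

/-- `G[B]` is a disjoint union of at most `k` complete graphs. -/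
def IsClusterSetLE {V : Type*} (G : SimpleGraph V) (k : ℕ) (B : Set V) : Prop :=
  ∃ g : B → Fin k, ∀ u w : B, u ≠ w → (G.Adj u w ↔ g u = g w)

/-- `G[A]` is a complete multipartite graph with at most `s` parts. -/
def IsCompleteMultipartiteSetLE {V : Type*} (G : SimpleGraph V) (s : ℕ) (A : Set V) : Prop :=
  ∃ f : A → Fin s, ∀ u w : A, G.Adj u w ↔ f u ≠ f w

/-! ### Polarity properties -/

/-- `G` is unipolar: a partition `(A, Aᶜ)` with `A` a clique and `G[Aᶜ]` a cluster. -/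
def Unipolar {V : Type*} (G : SimpleGraph V) : Prop :=
  ∃ A : Set V, G.IsClique A ∧ IsClusterSet G Aᶜ

/-- `G` is monopolar ((1,∞)-polar). -/
def Monopolar {V : Type*} (G : SimpleGraph V) : Prop :=
  ∃ A : Set V, _root_.IsIndepSet G A ∧ IsClusterSet G Aᶜ

/-- `G` is polar ((∞,∞)-polar). -/
def Polar {V : Type*} (G : SimpleGraph V) : Prop :=
  ∃ A : Set V, IsCompleteMultipartiteSet G A ∧ IsClusterSet G Aᶜ

/-- `G` is (s,1)-polar. -/
def SOnePolar {V : Type*} (s : ℕ) (G : SimpleGraph V) : Prop :=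
  ∃ A : Set V, IsCompleteMultipartiteSetLE G s A ∧ G.IsClique Aᶜ

/-- `G` is (∞,1)-polar. -/
def InfOnePolar {V : Type*} (G : SimpleGraph V) : Prop :=
  ∃ A : Set V, IsCompleteMultipartiteSet G A ∧ G.IsClique Aᶜ

/-- `G` is (1,k)-polar. -/
def OneKPolar {V : Type*} (k : ℕ) (G : SimpleGraph V) : Prop :=
  ∃ A : Set V, _root_.IsIndepSet G A ∧ IsClusterSetLE G k Aᶜ

/-! ### Minimal obstructions -/

def MinUnipolarObstruction {V : Type*} (G : SimpleGraph V) : Prop :=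
  ¬ Unipolar G ∧ ∀ s : Set V, s ≠ Set.univ → Unipolar (G.induce s)

def MinMonopolarObstruction {V : Type*} (G : SimpleGraph V) : Prop :=
  ¬ Monopolar G ∧ ∀ s : Set V, s ≠ Set.univ → Monopolar (G.induce s)

def MinPolarObstruction {V : Type*} (G : SimpleGraph V) : Prop :=
  ¬ Polar G ∧ ∀ s : Set V, s ≠ Set.univ → Polar (G.induce s)

def MinSOnePolarObstruction {V : Type*} (s : ℕ) (G : SimpleGraph V) : Prop :=
  ¬ SOnePolar s G ∧ ∀ t : Set V, t ≠ Set.univ → SOnePolar s (G.induce t)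

def MinInfOnePolarObstruction {V : Type*} (G : SimpleGraph V) : Prop :=
  ¬ InfOnePolar G ∧ ∀ t : Set V, t ≠ Set.univ → InfOnePolar (G.induce t)

def MinOneKPolarObstruction {V : Type*} (k : ℕ) (G : SimpleGraph V) : Prop :=
  ¬ OneKPolar k G ∧ ∀ t : Set V, t ≠ Set.univ → OneKPolar k (G.induce t)

/-! ### Graph constructions -/

/-- The join of two graphs: all edges added between the summands. -/
def joinG {α β : Type*} (G : SimpleGraph α) (H : SimpleGraph β) : SimpleGraph (α ⊕ β) where
  Adj x y := (G ⊕g H).Adj x y ∨ (x.isLeft ∧ y.isRight) ∨ (x.isRight ∧ y.isLeft)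
  symm := ⟨fun x y h => by
    rcases h with h | ⟨h1, h2⟩ | ⟨h1, h2⟩
    · exact Or.inl ((G ⊕g H).adj_symm h)
    · exact Or.inr (Or.inr ⟨h2, h1⟩)
    · exact Or.inr (Or.inl ⟨h2, h1⟩)⟩
  loopless := ⟨fun x h => by
    rcases h with h | ⟨h1, h2⟩ | ⟨h1, h2⟩
    · exact (G ⊕g H).loopless.irrefl x h
    · cases x <;> simp_all
    · cases x <;> simp_all⟩

/-- `K_n`, the complete graph on `n` vertices. -/
def KG (n : ℕ) : SimpleGraph (Fin n) := ⊤

/-- `n K_1`, the edgeless graph on `n` vertices. -/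
def EG (n : ℕ) : SimpleGraph (Fin n) := ⊥

/-- The banner graph `P`: a four-cycle `0 1 2 3` with a pendant vertex `4` adjacent to `0`. -/
def banner : SimpleGraph (Fin 5) :=
  SimpleGraph.fromEdgeSet {s(0, 1), s(1, 2), s(2, 3), s(3, 0), s(0, 4)}

/-- The chair (fork) graph `F`: a path `0 1 2 3` with an extra vertex `4` adjacent to `1`. -/
def chair : SimpleGraph (Fin 5) :=
  SimpleGraph.fromEdgeSet {s(0, 1), s(1, 2), s(2, 3), s(1, 4)}

/-- `2P_3`. -/
def twoP3 : SimpleGraph (Fin 3 ⊕ Fin 3) := pathGraph 3 ⊕g pathGraph 3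

/-- `K_{2,3}`. -/
def K23 : SimpleGraph (Fin 2 ⊕ Fin 3) := completeBipartiteGraph (Fin 2) (Fin 3)

/-- The seven graphs `E1, E2, E3, E7, E10, E11, E12`. -/
def E1 : SimpleGraph (Fin 1 ⊕ (Fin 2 ⊕ Fin 2)) := KG 1 ⊕g (KG 2 ⊕g KG 2)
def E2 : SimpleGraph (Fin 3 ⊕ Fin 3) := pathGraph 3 ⊕g pathGraph 3
def E3 : SimpleGraph (Fin 4 ⊕ Fin 2) := cycleGraph 4 ⊕g EG 2
def E7 : SimpleGraph (Fin 1 ⊕ (Fin 3 ⊕ Fin 2)) := KG 1 ⊕g (pathGraph 3 ⊕g KG 2)ᶜ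
def E10 : SimpleGraph (Fin 1 ⊕ Fin 5) := KG 1 ⊕g cycleGraph 5
def E11 : SimpleGraph (Fin 1 ⊕ Fin 5) := KG 1 ⊕g banner
def E12 : SimpleGraph (Fin 1 ⊕ Fin 5) := KG 1 ⊕g (pathGraph 5)ᶜ

/-! ### P4 structure -/

/-- `W` induces a path on four vertices in `G`. -/
def InducesP4 {V : Type*} (G : SimpleGraph V) (W : Set V) : Prop :=
  Nonempty (G.induce W ≃g pathGraph 4)

/-- A graph is a cograph if it has no induced `P_4`. -/
def Cograph {V : Type*} (G : SimpleGraph V) : Prop :=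
  ∀ W : Set V, ¬ InducesP4 G W

/-- `G` is `P_4`-sparse: any five vertices induce at most one `P_4`. -/
def P4Sparse {V : Type*} (G : SimpleGraph V) : Prop :=
  ∀ s : Set V, s.ncard = 5 → ∀ W₁ W₂ : Set V, W₁ ⊆ s → W₂ ⊆ s →
    InducesP4 G W₁ → InducesP4 G W₂ → W₁ = W₂

/-- `G` is `P_4`-extendible. -/
def P4Extendible {V : Type*} (G : SimpleGraph V) : Prop :=
  ∀ W : Set V, InducesP4 G W →
    ∀ v₁ v₂ : V, v₁ ∉ W → v₂ ∉ W →
      (∃ W₁ : Set V, InducesP4 G W₁ ∧ v₁ ∈ W₁ ∧ (W₁ ∩ W).Nonempty) →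
      (∃ W₂ : Set V, InducesP4 G W₂ ∧ v₂ ∈ W₂ ∧ (W₂ ∩ W).Nonempty) → v₁ = v₂

/-! ### Spiders -/

/-- `(S, K, R)` is a spider partition of `G`. -/
def IsSpiderPartition {V : Type*} (G : SimpleGraph V) (S K R : Set V) : Prop :=
  S ∪ K ∪ R = Set.univ ∧ Disjoint S K ∧ Disjoint S R ∧ Disjoint K R ∧
  S.ncard = K.ncard ∧ 2 ≤ K.ncard ∧
  G.IsClique K ∧ _root_.IsIndepSet G S ∧
  (∃ f : S → K, Function.Bijective f ∧
    ((∀ s : S, ∀ k : K, G.Adj s k ↔ (f s : V) = k) ∨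
     (∀ s : S, ∀ k : K, G.Adj s k ↔ (f s : V) ≠ k))) ∧
  (∀ r ∈ R, ∀ k ∈ K, G.Adj r k) ∧
  (∀ r ∈ R, ∀ s ∈ S, ¬ G.Adj r s)

/-- `G` is a `B`-spider with partition `(S, K, R)`, where `B` is a fixed base graph with
midpoint set `M` and endpoint set `E`: `G` is obtained from a copy of `B` (whose midpoints
form `K` and whose endpoints form `S`) by adding the set `R` of vertices, each adjacent to
all midpoints and to no endpoint. -/
def IsBaseSpider {n : ℕ} {V : Type*} (B : SimpleGraph (Fin n)) (M E : Set (Fin n))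
    (G : SimpleGraph V) (S K R : Set V) : Prop :=
  ∃ f : Fin n → V, Function.Injective f ∧
    (∀ i j : Fin n, G.Adj (f i) (f j) ↔ B.Adj i j) ∧
    K = f '' M ∧ S = f '' E ∧ R = (Set.range f)ᶜ ∧
    (∀ r ∈ R, ∀ x ∈ K, G.Adj r x) ∧
    (∀ r ∈ R, ∀ x ∈ S, ¬ G.Adj r x)

/-- Disjoint union of an indexed family of graphs. -/
def sigmaDisjUnion {ι : Type*} {V : ι → Type*} (G : ∀ i, SimpleGraph (V i)) :
    SimpleGraph (Σ i, V i) where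
  Adj x y := ∃ (i : ι) (a b : V i), (G i).Adj a b ∧ x = ⟨i, a⟩ ∧ y = ⟨i, b⟩
  symm := ⟨by
    rintro x y ⟨i, a, b, h, rfl, rfl⟩
    exact ⟨i, b, a, h.symm, rfl, rfl⟩⟩
  loopless := ⟨by
    rintro x ⟨i, a, b, h, rfl, h2⟩
    rw [Sigma.mk.inj_iff] at h2
    obtain ⟨-, h2⟩ := h2
    exact h.ne (eq_of_heq h2)⟩

/-! ### Auxiliary lemmas for statement 11 -/

lemma sigma_adj_iff {ι : Type*} {V : ι → Type*} (G : ∀ i, SimpleGraph (V i))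
    {i : ι} {a b : V i} :
    (sigmaDisjUnion G).Adj ⟨i, a⟩ ⟨i, b⟩ ↔ (G i).Adj a b := by
  constructor
  · rintro ⟨j, c, d, h, h1, h2⟩
    obtain ⟨rfl, h1⟩ := Sigma.mk.inj_iff.mp h1
    obtain ⟨-, h2⟩ := Sigma.mk.inj_iff.mp h2
    obtain rfl := eq_of_heq h1
    obtain rfl := eq_of_heq h2
    exact h
  · intro h
    exact ⟨i, a, b, h, rfl, rfl⟩

lemma sigma_adj_fst {ι : Type*} {V : ι → Type*} (G : ∀ i, SimpleGraph (V i))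
    {x y : Σ i, V i} (h : (sigmaDisjUnion G).Adj x y) : x.1 = y.1 := by
  obtain ⟨i, a, b, -, rfl, rfl⟩ := h
  rfl

lemma oneKPolar_of_iso {α : Type*} {β : Type*} {G : SimpleGraph α} {H : SimpleGraph β}
    (e : G ≃g H) {m : ℕ} (h : OneKPolar m G) : OneKPolar m H := by
  obtain ⟨A, hA, g, hg⟩ := h
  refine ⟨(fun v => e.symm v) ⁻¹' A, ?_, ?_⟩
  · intro u w hu hw hadj
    exact hA hu hw (e.symm.map_adj_iff.mpr hadj)
  · refine ⟨fun x => g ⟨e.symm ↑x, x.2⟩, ?_⟩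
    intro u w huw
    have hne : (⟨e.symm ↑u, u.2⟩ : ↥Aᶜ) ≠ ⟨e.symm ↑w, w.2⟩ := by
      intro hc
      apply huw
      exact Subtype.ext (e.symm.injective (congrArg Subtype.val hc))
    have key := hg ⟨e.symm ↑u, u.2⟩ ⟨e.symm ↑w, w.2⟩ hne
    exact (e.symm.map_adj_iff.symm.trans key)

lemma oneKPolar_induce {α : Type*} {G : SimpleGraph α} {m : ℕ}
    (h : OneKPolar m G) (W : Set α) : OneKPolar m (G.induce W) := by
  obtain ⟨A, hA, g, hg⟩ := h
  refine ⟨(fun v : W => (v : α)) ⁻¹' A, ?_, ?_⟩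
  · intro u w hu hw hadj
    exact hA hu hw hadj
  · refine ⟨fun x => g ⟨((x : W) : α), x.2⟩, ?_⟩
    intro u w huw
    have hne : (⟨((u : W) : α), u.2⟩ : ↥Aᶜ) ≠ ⟨((w : W) : α), w.2⟩ := by
      intro hc
      apply huw
      have h0 := Subtype.ext_iff.mp hc
      exact Subtype.ext (Subtype.ext h0)
    exact hg ⟨((u : W) : α), u.2⟩ ⟨((w : W) : α), w.2⟩ hne

lemma sigma_oneKPolar {ι : Type*} [Fintype ι] {V : ι → Type*}
    (G : ∀ i, SimpleGraph (V i)) (m : ι → ℕ)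
    (h : ∀ i, OneKPolar (m i) (G i)) : OneKPolar (∑ i, m i) (sigmaDisjUnion G) := by
  classical
  choose A hA g hg using h
  have hcard : Fintype.card (Σ i, Fin (m i)) ≤ Fintype.card (Fin (∑ i, m i)) := by
    simp [Fintype.card_sigma]
  obtain ⟨E⟩ := Function.Embedding.nonempty_of_card_le hcard
  refine ⟨{x | x.2 ∈ A x.1}, ?_, ?_⟩
  · rintro u w hu hw ⟨i, a, b, hab, rfl, rfl⟩
    exact hA i hu hw hab
  · refine ⟨fun x => E ⟨(x : Σ i, V i).1, g _ ⟨(x : Σ i, V i).2, x.2⟩⟩, ?_⟩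
    rintro ⟨⟨i, a⟩, hu⟩ ⟨⟨j, b⟩, hw⟩ hne
    rcases eq_or_ne i j with rfl | hij
    · have hab : (⟨a, hu⟩ : ↥(A i)ᶜ) ≠ ⟨b, hw⟩ := by
        intro hc
        apply hne
        apply Subtype.ext
        exact congrArg (fun z : V i => (⟨i, z⟩ : Σ i, V i)) (congrArg Subtype.val hc)
      refine ((sigma_adj_iff G).trans (hg i ⟨a, hu⟩ ⟨b, hw⟩ hab)).trans ?_
      constructor
      · intro hh
        exact congrArg E (congrArg (fun z => (⟨i, z⟩ : Σ i, Fin (m i))) hh)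
      · intro hh
        have := E.injective hh
        obtain ⟨-, h2⟩ := Sigma.mk.inj_iff.mp this
        exact eq_of_heq h2
    · constructor
      · intro hh
        exact absurd (sigma_adj_fst G hh) hij
      · intro hh
        exact absurd (congrArg Sigma.fst (E.injective hh)) hij

def sigmaInduceIso {ι : Type*} {V : ι → Type*} (G : ∀ i, SimpleGraph (V i))
    (s : Set (Σ i, V i)) :
    sigmaDisjUnion (fun i => (G i).induce {v | (⟨i, v⟩ : Σ i, V i) ∈ s}) ≃g
      (sigmaDisjUnion G).induce s where
  toFun x := ⟨⟨x.1, (x.2 : V x.1)⟩, x.2.2⟩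
  invFun y := ⟨(y : Σ i, V i).1, ⟨(y : Σ i, V i).2, y.2⟩⟩
  left_inv x := rfl
  right_inv y := rfl
  map_rel_iff' := by
    rintro ⟨i, a⟩ ⟨j, b⟩
    show (sigmaDisjUnion G).Adj ⟨i, ↑a⟩ ⟨j, ↑b⟩ ↔ _
    rcases eq_or_ne i j with rfl | hij
    · rw [sigma_adj_iff G, sigma_adj_iff]
      exact Iff.rfl
    · constructor
      · intro h
        exact absurd (sigma_adj_fst G h) hij
      · intro h
        exact absurd (sigma_adj_fst _ h) hij

/-- If each `G i` is a minimal `(1, k i)`-polar obstruction which is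
`(1, k i + 1)`-polar, then for `k = t - 1 + ∑ k i`, the disjoint union of the `G i` is a
minimal `(1,k)`-polar obstruction which is `(1,k+1)`-polar. -/
theorem stmt_11 (t : ℕ) (ht : 2 ≤ t) (V : Fin t → Type*) [∀ i, Fintype (V i)]
    (G : ∀ i, SimpleGraph (V i)) (k : Fin t → ℕ)
    (hobs : ∀ i, MinOneKPolarObstruction (k i) (G i))
    (hpol : ∀ i, OneKPolar (k i + 1) (G i)) :
    MinOneKPolarObstruction (t - 1 + ∑ i, k i) (sigmaDisjUnion G) ∧
      OneKPolar ((t - 1 + ∑ i, k i) + 1) (sigmaDisjUnion G) := by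
  classical
  have hpol1 : OneKPolar ((t - 1 + ∑ i, k i) + 1) (sigmaDisjUnion G) := by
    have hsig := sigma_oneKPolar G (fun i => k i + 1) hpol
    have hsum : ∑ i, (k i + 1) = (t - 1 + ∑ i, k i) + 1 := by
      rw [Finset.sum_add_distrib, Finset.sum_const, Finset.card_univ, Fintype.card_fin,
        smul_eq_mul, mul_one]
      omega
    rwa [hsum] at hsig
  refine ⟨⟨?_, ?_⟩, hpol1⟩
  · -- not (1,k)-polar
    rintro ⟨A, hA, g, hg⟩
    let used : Fin t → Finset (Fin (t - 1 + ∑ i, k i)) := fun i =>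
      Finset.univ.filter
        (fun c => ∃ (v : V i) (h : (⟨i, v⟩ : Σ i, V i) ∈ Aᶜ), g ⟨⟨i, v⟩, h⟩ = c)
    have hmem : ∀ i c, c ∈ used i ↔
        ∃ (v : V i) (h : (⟨i, v⟩ : Σ i, V i) ∈ Aᶜ), g ⟨⟨i, v⟩, h⟩ = c := by
      intro i c
      simp only [used, Finset.mem_filter, Finset.mem_univ, true_and]
    have hdisj : ∀ i j : Fin t, i ≠ j → Disjoint (used i) (used j) := by
      intro i j hij
      rw [Finset.disjoint_left]
      intro c hci hcj
      obtain ⟨u, hu, hgu⟩ := (hmem i c).mp hci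
      obtain ⟨w, hw, hgw⟩ := (hmem j c).mp hcj
      have hne : (⟨⟨i, u⟩, hu⟩ : ↥Aᶜ) ≠ ⟨⟨j, w⟩, hw⟩ := by
        intro hc
        exact hij (congrArg Sigma.fst (congrArg Subtype.val hc))
      have hadj := (hg _ _ hne).mpr (hgu.trans hgw.symm)
      exact hij (sigma_adj_fst G hadj)
    have hlb : ∀ i, k i + 1 ≤ (used i).card := by
      intro i
      by_contra hle
      push_neg at hle
      have hcard : Fintype.card {c // c ∈ used i} ≤ Fintype.card (Fin (k i)) := by
        rw [Fintype.card_fin, Fintype.card_coe]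
        omega
      obtain ⟨e⟩ := Function.Embedding.nonempty_of_card_le hcard
      apply (hobs i).1
      refine ⟨{v | (⟨i, v⟩ : Σ i, V i) ∈ A}, ?_, ?_⟩
      · intro u w hu hw hadj
        exact hA hu hw ((sigma_adj_iff G).mpr hadj)
      · refine ⟨fun x => e ⟨g ⟨⟨i, ↑x⟩, x.2⟩, (hmem i _).mpr ⟨↑x, x.2, rfl⟩⟩, ?_⟩
        intro u w huw
        have hne : (⟨⟨i, ↑u⟩, u.2⟩ : ↥Aᶜ) ≠ ⟨⟨i, ↑w⟩, w.2⟩ := by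
          intro hc
          apply huw
          have h1 := congrArg Subtype.val hc
          obtain ⟨-, h2⟩ := Sigma.mk.inj_iff.mp h1
          exact Subtype.ext (eq_of_heq h2)
        refine ((sigma_adj_iff G).symm.trans (hg ⟨⟨i, ↑u⟩, u.2⟩ ⟨⟨i, ↑w⟩, w.2⟩ hne)).trans ?_
        constructor
        · intro hh
          exact congrArg e (Subtype.ext hh)
        · intro hh
          exact congrArg Subtype.val (e.injective hh)
    have hsum1 : ∑ i, (used i).card ≤ t - 1 + ∑ i, k i := by
      rw [← Finset.card_biUnion (fun i _ j _ hij => hdisj i j hij)]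
      have := Finset.card_le_univ (Finset.univ.biUnion used)
      simpa using this
    have hsum2 : ∑ i, (k i + 1) ≤ ∑ i, (used i).card :=
      Finset.sum_le_sum fun i _ => hlb i
    have hsum3 : ∑ i, (k i + 1) = ∑ i, k i + t := by
      rw [Finset.sum_add_distrib, Finset.sum_const, Finset.card_univ, Fintype.card_fin,
        smul_eq_mul, mul_one]
    rw [hsum3] at hsum2
    have hcon := hsum2.trans hsum1
    obtain ⟨S, hS⟩ : ∃ S, ∑ i, k i = S := ⟨_, rfl⟩
    rw [hS] at hcon
    omega
  · -- minimality
    intro s hs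
    have hex : ∃ x : Σ i, V i, x ∉ s := by
      by_contra hc
      push_neg at hc
      exact hs (Set.eq_univ_iff_forall.mpr hc)
    obtain ⟨⟨i₀, v₀⟩, hx⟩ := hex
    set m : Fin t → ℕ := fun i => if i = i₀ then k i else k i + 1 with hm
    have hind : ∀ i, OneKPolar (m i) ((G i).induce {v | (⟨i, v⟩ : Σ i, V i) ∈ s}) := by
      intro i
      rcases eq_or_ne i i₀ with rfl | hne
      · rw [hm]
        simp only [if_pos rfl]
        apply (hobs i).2
        intro hc
        apply hx
        have hv : v₀ ∈ {v | (⟨i, v⟩ : Σ i, V i) ∈ s} := by rw [hc]; trivial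
        exact hv
      · rw [hm]
        simp only [if_neg hne]
        exact oneKPolar_induce (hpol i) _
    have hsig := sigma_oneKPolar _ m hind
    have hres := oneKPolar_of_iso (sigmaInduceIso G s) hsig
    have hsum : ∑ i, m i = t - 1 + ∑ i, k i := by
      have h1 : m i₀ + ∑ i ∈ Finset.univ.erase i₀, m i = ∑ i, m i :=
        Finset.add_sum_erase _ _ (Finset.mem_univ _)
      have h2 : ∑ i ∈ Finset.univ.erase i₀, m i
          = ∑ i ∈ Finset.univ.erase i₀, (k i + 1) :=
        Finset.sum_congr rfl fun i hi => if_neg (Finset.ne_of_mem_erase hi)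
      have h3 : ∑ i ∈ Finset.univ.erase i₀, (k i + 1)
          = ∑ i ∈ Finset.univ.erase i₀, k i + (t - 1) := by
        rw [Finset.sum_add_distrib, Finset.sum_const, Finset.card_erase_of_mem
          (Finset.mem_univ _), Finset.card_univ, Fintype.card_fin, smul_eq_mul, mul_one]
      have h4 : k i₀ + ∑ i ∈ Finset.univ.erase i₀, k i = ∑ i, k i :=
        Finset.add_sum_erase _ _ (Finset.mem_univ _)
      have h5 : m i₀ = k i₀ := if_pos rfl
      omega
    rwa [hsum] at hres
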